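/- The cycle graph C_{2n+1} on 2n+1 vertices (n ≥ 2) with the path metric does not have p-negative type for any p > log₂ 3. Specifically, the signed weight vector assigning +1/2 to vertices v_1 and v_n and −1/2 to vertices v_2 and v_{n+1} yields Σ_{i,j} d^p α_i α_j > 0 for p > log₂ 3. -/

import Mathlib

open Finset

/-- Convexity consequence: for `m ≥ 2` and `p ≥ 1`, `2^p + (m-1)^p ≤ 1 + m^p`. -/
lemma aux_convex_key (m p : ℝ) (hm : 2 ≤ m) (hp : 1 ≤ p) :
    (2:ℝ) ^ p + (m - 1) ^ p ≤ 1 + m ^ p := by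
  have hm1 : (0:ℝ) < m - 1 := by linarith
  set t : ℝ := 1 / (m - 1) with ht
  set s : ℝ := (m - 2) / (m - 1) with hs
  have ht0 : 0 ≤ t := by positivity
  have hs0 : 0 ≤ s := div_nonneg (by linarith) hm1.le
  have hts : t + s = 1 := by
    rw [ht, hs, ← add_div, div_eq_one_iff_eq (ne_of_gt hm1)]; ring
  have hc := convexOn_rpow hp
  have h1 := hc.2 (Set.mem_Ici.2 (by norm_num : (0:ℝ) ≤ 1))
    (Set.mem_Ici.2 (by linarith : (0:ℝ) ≤ m)) (by linarith : 0 ≤ 1 - t) ht0 (by ring)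
  have h2 := hc.2 (Set.mem_Ici.2 (by norm_num : (0:ℝ) ≤ 1))
    (Set.mem_Ici.2 (by linarith : (0:ℝ) ≤ m)) (by linarith : 0 ≤ 1 - s) hs0 (by ring)
  simp only [smul_eq_mul] at h1 h2
  have e1 : (1 - t) * 1 + t * m = 2 := by
    have : t * (m - 1) = 1 := by rw [ht]; field_simp
    nlinarith [this]
  have e2 : (1 - s) * 1 + s * m = m - 1 := by
    have : s * (m - 1) = m - 2 := by rw [hs]; field_simp
    nlinarith [this]
  rw [e1, Real.one_rpow] at h1
  rw [e2, Real.one_rpow] at h2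
  have hsub : s = 1 - t := by linarith
  calc (2:ℝ) ^ p + (m - 1) ^ p
      ≤ ((1 - t) * 1 + t * m ^ p) + ((1 - s) * 1 + s * m ^ p) := add_le_add h1 h2
    _ = 1 + m ^ p := by rw [hsub]; ring

/-- The odd cycle `C_{2n+1}` (`n ≥ 2`) with the path metric fails to have `p`-negative
type for every `p > log₂ 3`: the signed weight vector with `+1/2` on the two antipodal-ish
edges `{v₁, v_{n+1}}` and `-1/2` on `{v₂, v_{n+2}}` (0-indexed: `+1/2` at `0, n` and
`-1/2` at `1, n+1`) makes the negative type quadratic form positive. -/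
theorem odd_cycle_fails_neg_type {n : ℕ} (hn : 2 ≤ n)
    (d : Fin (2 * n + 1) → Fin (2 * n + 1) → ℝ)
    (hd : ∀ i j, d i j =
      min ((((i : ℤ) - (j : ℤ)).natAbs : ℝ))
        ((2 * n + 1 : ℝ) - (((i : ℤ) - (j : ℤ)).natAbs : ℝ)))
    (α : Fin (2 * n + 1) → ℝ)
    (hα : ∀ i, α i = if (i : ℕ) = 0 ∨ (i : ℕ) = n then (1 : ℝ) / 2
      else if (i : ℕ) = 1 ∨ (i : ℕ) = n + 1 then -(1 / 2) else 0)
    (p : ℝ) (hp : Real.logb 2 3 < p) :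
    (∑ i, α i) = 0 ∧
      0 < ∑ i, ∑ j, d i j ^ p * α i * α j ∧
      ¬ (∀ β : Fin (2 * n + 1) → ℝ, (∑ i, β i) = 0 →
        (∑ i, ∑ j, d i j ^ p * β i * β j) ≤ 0) := by
  -- basic facts about p
  have hlogb1 : (1:ℝ) < Real.logb 2 3 := by
    have h22 : Real.logb 2 2 = 1 := Real.logb_self_eq_one (by norm_num)
    have : Real.logb 2 2 < Real.logb 2 3 :=
      Real.logb_lt_logb (by norm_num) (by norm_num) (by norm_num)
    linarith
  have hp1 : (1:ℝ) ≤ p := by linarith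
  have hp0 : p ≠ 0 := by positivity
  have h2p : (3:ℝ) < 2 ^ p := by
    have := (Real.rpow_lt_rpow_left_iff (by norm_num : (1:ℝ) < 2)).2 hp
    rwa [Real.rpow_logb (by norm_num) (by norm_num) (by norm_num)] at this
  -- the four relevant vertices
  set i0 : Fin (2 * n + 1) := ⟨0, by omega⟩ with hi0
  set i1 : Fin (2 * n + 1) := ⟨1, by omega⟩ with hi1
  set i2 : Fin (2 * n + 1) := ⟨n, by omega⟩ with hi2
  set i3 : Fin (2 * n + 1) := ⟨n + 1, by omega⟩ with hi3
  have hv0 : (i0 : ℕ) = 0 := rfl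
  have hv1 : (i1 : ℕ) = 1 := rfl
  have hv2 : (i2 : ℕ) = n := rfl
  have hv3 : (i3 : ℕ) = n + 1 := rfl
  have hz0 : (i0 : ℤ) = 0 := by simp [hi0]
  have hz1 : (i1 : ℤ) = 1 := by simp [hi1]
  have hz2 : (i2 : ℤ) = n := by simp [hi2]
  have hz3 : (i3 : ℤ) = n + 1 := by simp [hi3]
  have hnr : (2:ℝ) ≤ (n:ℝ) := by exact_mod_cast hn
  -- reduction of sums to the four vertices
  have hS : ∀ f : Fin (2 * n + 1) → ℝ,
      (∀ i : Fin (2 * n + 1), (i : ℕ) ≠ 0 → (i : ℕ) ≠ 1 → (i : ℕ) ≠ n → (i : ℕ) ≠ n + 1 →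
        f i = 0) → ∑ i, f i = f i0 + f i1 + f i2 + f i3 := by
    intro f hf
    have hsub : ({i0, i1, i2, i3} : Finset (Fin (2 * n + 1))) ⊆ univ := subset_univ _
    rw [← Finset.sum_subset hsub (by
      intro i _ hi
      simp only [Finset.mem_insert, Finset.mem_singleton, not_or, Fin.ext_iff, hi0, hi1,
        hi2, hi3] at hi
      exact hf i (by simpa using hi.1) (by simpa using hi.2.1) (by simpa using hi.2.2.1)
        (by simpa using hi.2.2.2))]
    have d01 : i0 ≠ i1 := by simp [Fin.ext_iff, hi0, hi1]
    have d02 : i0 ≠ i2 := by simp [Fin.ext_iff, hi0, hi2]; omega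
    have d03 : i0 ≠ i3 := by simp [Fin.ext_iff, hi0, hi3]
    have d12 : i1 ≠ i2 := by simp [Fin.ext_iff, hi1, hi2]; omega
    have d13 : i1 ≠ i3 := by simp [Fin.ext_iff, hi1, hi3]; omega
    have d23 : i2 ≠ i3 := by simp [Fin.ext_iff, hi2, hi3]
    rw [Finset.sum_insert (by simp [d01, d02, d03]),
      Finset.sum_insert (by simp [d12, d13]),
      Finset.sum_insert (by simp [d23]), Finset.sum_singleton]
    ring
  -- α values
  have hαz : ∀ i : Fin (2 * n + 1), (i : ℕ) ≠ 0 → (i : ℕ) ≠ 1 → (i : ℕ) ≠ n →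
      (i : ℕ) ≠ n + 1 → α i = 0 := by
    intro i h1 h2 h3 h4
    rw [hα, if_neg (by tauto), if_neg (by tauto)]
  have hα0 : α i0 = 1 / 2 := by rw [hα, hv0, if_pos (Or.inl rfl)]
  have hα1 : α i1 = -(1 / 2) := by rw [hα, hv1, if_neg (by omega), if_pos (Or.inl rfl)]
  have hα2 : α i2 = 1 / 2 := by rw [hα, hv2, if_pos (Or.inr rfl)]
  have hα3 : α i3 = -(1 / 2) := by rw [hα, hv3, if_neg (by omega), if_pos (Or.inr rfl)]
  -- d values
  have hdsym : ∀ i j, d i j = d j i := by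
    intro i j
    have : ((i : ℤ) - (j : ℤ)).natAbs = ((j : ℤ) - (i : ℤ)).natAbs := by omega
    rw [hd, hd, this]
  have hdiag : ∀ i, d i i = 0 := by
    intro i
    rw [hd]
    simp only [sub_self, Int.natAbs_zero, Nat.cast_zero, sub_zero]
    exact min_eq_left (by positivity)
  have hcast : ∀ (a b : Fin (2 * n + 1)) (k : ℕ),
      ((a : ℤ) - (b : ℤ)).natAbs = k → ((k:ℝ) ≤ (2*n+1:ℝ) - k) → d a b = (k : ℝ) := by
    intro a b k hk hle
    rw [hd, hk, min_eq_left hle]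
  have hd01 : d i0 i1 = 1 := by
    have := hcast i0 i1 1 (by rw [hz0, hz1]; omega) (by push_cast; linarith)
    simpa using this
  have hd02 : d i0 i2 = (n:ℝ) := by
    have := hcast i0 i2 n (by rw [hz0, hz2]; omega) (by linarith)
    simpa using this
  have hd03 : d i0 i3 = (n:ℝ) := by
    rw [hd, hz0, hz3]
    have h1 : ((0:ℤ) - (n + 1)).natAbs = n + 1 := by omega
    rw [h1]
    have : ((2 * n + 1 : ℝ)) - ((n + 1 : ℕ) : ℝ) = (n : ℝ) := by push_cast; ring
    rw [min_eq_right (by push_cast; linarith), this]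
  have hd12 : d i1 i2 = (n:ℝ) - 1 := by
    rw [hd, hz1, hz2]
    have h1 : ((1:ℤ) - n).natAbs = n - 1 := by omega
    rw [h1, min_eq_left (by
      rw [Nat.cast_sub (by omega)]
      push_cast; linarith)]
    rw [Nat.cast_sub (by omega)]; norm_num
  have hd13 : d i1 i3 = (n:ℝ) := by
    have := hcast i1 i3 n (by rw [hz1, hz3]; omega) (by linarith)
    simpa using this
  have hd23 : d i2 i3 = 1 := by
    have := hcast i2 i3 1 (by rw [hz2, hz3]; omega) (by push_cast; linarith)
    simpa using this
  have hd10 : d i1 i0 = 1 := by rw [hdsym]; exact hd01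
  have hd20 : d i2 i0 = (n:ℝ) := by rw [hdsym]; exact hd02
  have hd30 : d i3 i0 = (n:ℝ) := by rw [hdsym]; exact hd03
  have hd21 : d i2 i1 = (n:ℝ) - 1 := by rw [hdsym]; exact hd12
  have hd31 : d i3 i1 = (n:ℝ) := by rw [hdsym]; exact hd13
  have hd32 : d i3 i2 = 1 := by rw [hdsym]; exact hd23
  -- the sum of α is 0
  have hsumα : (∑ i, α i) = 0 := by
    rw [hS α hαz, hα0, hα1, hα2, hα3]; ring
  -- the quadratic form
  have hform : ∑ i, ∑ j, d i j ^ p * α i * α j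
      = ((n:ℝ) ^ p - ((n:ℝ) - 1) ^ p - 2) / 2 := by
    rw [hS (fun i => ∑ j, d i j ^ p * α i * α j)
      (fun i a b c e => by simp [hαz i a b c e])]
    rw [hS (fun j => d i0 j ^ p * α i0 * α j)
      (fun j a b c e => by simp [hαz j a b c e])]
    rw [hS (fun j => d i1 j ^ p * α i1 * α j)
      (fun j a b c e => by simp [hαz j a b c e])]
    rw [hS (fun j => d i2 j ^ p * α i2 * α j)
      (fun j a b c e => by simp [hαz j a b c e])]
    rw [hS (fun j => d i3 j ^ p * α i3 * α j)
      (fun j a b c e => by simp [hαz j a b c e])]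
    simp only [hdiag, hd01, hd02, hd03, hd10, hd12, hd13, hd20, hd21, hd23, hd30, hd31,
      hd32, hα0, hα1, hα2, hα3, Real.one_rpow, Real.zero_rpow hp0]
    ring
  -- positivity
  have hkey : (2:ℝ) ^ p + ((n:ℝ) - 1) ^ p ≤ 1 + (n:ℝ) ^ p := aux_convex_key _ p hnr hp1
  have hpos : 0 < ∑ i, ∑ j, d i j ^ p * α i * α j := by
    rw [hform]; linarith
  exact ⟨hsumα, hpos, fun h => absurd (h α hsumα) (not_le.2 hpos)⟩
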